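/- Let (E,ℒ) be a labeled graph satisfying the standing assumptions with ℰ the smallest normal accommodating set, let A ∈ ℰ be minimal, and suppose (α,A) is a loop. Then H := {B ∈ ℰ : r(B,β) ∩ A = ∅ for all β ∈ ℒ*(E)} is a hereditary and saturated subset of ℰ, and A ∉ H. If moreover α has the smallest length among all loops at A, α has an exit, and every loop (β,A) satisfies β^m = α^k for some integers m, k ≥ 1, then H contains a nonempty set. -/
import Mathlib


/-- The `n`-fold concatenation (power) `w^n` of a finite word `w`. -/
def wpow {Λ : Type*} (w : List Λ) (n : ℕ) : List Λ := (List.replicate n w).flatten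

/-- The finite word `x_{[1,n]}` formed by the first `n` letters of an infinite word `x`. -/
def wordPrefix {Λ : Type*} (x : ℕ → Λ) (n : ℕ) : List Λ := (List.range n).map x

/-- A labeled graph `(E, ℒ)`: a directed graph with vertex set `V` and edge type `Edge`
(with range and source maps), together with a surjective labeling map `lbl` onto the
alphabet `Λ`. -/
structure LabeledGraph (V : Type*) (Λ : Type*) where
  Edge : Type*
  src : Edge → V
  rng : Edge → V
  lbl : Edge → Λ
  lbl_surjective : Function.Surjective lbl

namespace LabeledGraph

variable {V : Type*} {Λ : Type*}

/-- `G.PathLabel u w α` holds iff there is a finite path `λ` of length `≥ 1` in the graph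
with source `u`, range `w` and label word `ℒ(λ) = α`. -/
inductive PathLabel (G : LabeledGraph V Λ) : V → V → List Λ → Prop
  | single (e : G.Edge) : PathLabel G (G.src e) (G.rng e) [G.lbl e]
  | cons (e : G.Edge) {w : V} {α : List Λ} :
      PathLabel G (G.rng e) w α → PathLabel G (G.src e) w (G.lbl e :: α)

variable (G : LabeledGraph V Λ)

/-- `α ∈ ℒ*(E)`: `α` is the label of some path of length `≥ 1`. -/
def IsLabel (α : List Λ) : Prop := ∃ u w, G.PathLabel u w α

/-- The relative range `r(A, α)` of `α` with respect to `A`. -/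
def rel (A : Set V) (α : List Λ) : Set V := {w | ∃ u ∈ A, G.PathLabel u w α}

/-- `r(α) = r(E⁰, α)`. -/
def range' (α : List Λ) : Set V := G.rel Set.univ α

/-- `s(α)`: the set of sources of paths labeled `α`. -/
def srcSet (α : List Λ) : Set V := {u | ∃ w, G.PathLabel u w α}

/-- `ℒ(AEⁿ)`: labels of paths of length `n` with source in `A`. -/
def lblFrom (A : Set V) (n : ℕ) : Set (List Λ) :=
  {α | α.length = n ∧ ∃ u ∈ A, ∃ w, G.PathLabel u w α}

/-- `ℒ(AE^{≥1})`: labels of paths of length `≥ 1` with source in `A`. -/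
def lblFromGe (A : Set V) : Set (List Λ) := {α | ∃ u ∈ A, ∃ w, G.PathLabel u w α}

/-- `ℒ(EⁿA)`: labels of paths of length `n` with range in `A`. -/
def lblTo (A : Set V) (n : ℕ) : Set (List Λ) :=
  {α | α.length = n ∧ ∃ u, ∃ w ∈ A, G.PathLabel u w α}

/-- The generalized vertex `[v]_l`: the set of vertices `w` receiving at least one edge
such that `ℒ(E^k w) = ℒ(E^k v)` for all `1 ≤ k ≤ l`. -/
def gv (v : V) (l : ℕ) : Set V :=
  {w | (∃ e : G.Edge, G.rng e = w) ∧
    ∀ k : ℕ, 1 ≤ k → k ≤ l → G.lblTo {w} k = G.lblTo {v} k}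

/-- Membership in `ℰ`, the smallest collection of subsets of `E⁰` containing all ranges
`r(α)` and closed under relative ranges, finite intersections, finite unions and
relative complements (the smallest normal accommodating set). -/
inductive memE : Set V → Prop
  | empty : memE ∅
  | range (α : List Λ) : α ≠ [] → memE (G.range' α)
  | relRange {A : Set V} (α : List Λ) : α ≠ [] → memE A → memE (G.rel A α)
  | inter {A C : Set V} : memE A → memE C → memE (A ∩ C)
  | union {A C : Set V} : memE A → memE C → memE (A ∪ C)
  | diff {A C : Set V} : memE A → memE C → memE (A \ C)

/-- The standing assumptions on the labeled space `(E, ℒ, ℰ)`: the graph has no sinks and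
the labeled space is weakly left-resolving, set-finite and receiver set-finite. -/
structure Standing : Prop where
  no_sinks : ∀ u : V, ∃ e : G.Edge, G.src e = u
  weakly_left_resolving : ∀ A C : Set V, G.memE A → G.memE C →
    ∀ α : List Λ, α ≠ [] → G.rel (A ∩ C) α = G.rel A α ∩ G.rel C α
  set_finite : ∀ A : Set V, G.memE A → ∀ k : ℕ, 1 ≤ k → (G.lblFrom A k).Finite
  receiver_set_finite : ∀ A : Set V, G.memE A → ∀ k : ℕ, 1 ≤ k → (G.lblTo A k).Finite

/-- `α` is agreeable for `[v]_l` (the condition only depends on `l`):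
`α = βα' = α'γ` with `α', β, γ ∈ ℒ*(E)` and `|β| = |γ| ≤ l`. -/
def Agreeable (l : ℕ) (α : List Λ) : Prop :=
  ∃ α' β γ : List Λ, G.IsLabel α' ∧ G.IsLabel β ∧ G.IsLabel γ ∧
    β.length = γ.length ∧ β.length ≤ l ∧ α = β ++ α' ∧ α = α' ++ γ

/-- `α` (a path with `s(α) ∩ [v]_l ≠ ∅`) is disagreeable for `[v]_l`. -/
def DisagreeableFor (v : V) (l : ℕ) (α : List Λ) : Prop :=
  (G.srcSet α ∩ G.gv v l).Nonempty ∧ ¬ G.Agreeable l α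

/-- The generalized vertex `[v]_l` is disagreeable: there is `N ≥ 1` such that for every
`n > N` there is a path in `ℒ(E^{≥n})` which is disagreeable for `[v]_l`. -/
def DisagreeableGV (v : V) (l : ℕ) : Prop :=
  ∃ N : ℕ, 1 ≤ N ∧ ∀ n : ℕ, N < n →
    ∃ α : List Λ, n ≤ α.length ∧ G.DisagreeableFor v l α

/-- The labeled space `(E, ℒ, ℰ)` is disagreeable. -/
def Disagreeable : Prop :=
  ∀ v : V, ∃ L : ℕ, 1 ≤ L ∧ ∀ l : ℕ, L ≤ l → G.DisagreeableGV v l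

/-- `(α, A)` is a loop: `A ∈ ℰ` is nonempty, `α ∈ ℒ*(E)` and `A ⊆ r(A, α)`. -/
def IsLoop (α : List Λ) (A : Set V) : Prop :=
  α ≠ [] ∧ G.memE A ∧ A.Nonempty ∧ A ⊆ G.rel A α

/-- The loop `(α, A)` has an exit: either (i) there is `β ∈ ℒ(AE^{|α|})` with `β ≠ α` and
`r(A, β) ≠ ∅`, or (ii) `A ⊊ r(A, α)`. -/
def HasExit (α : List Λ) (A : Set V) : Prop :=
  (∃ β : List Λ, β ∈ G.lblFrom A α.length ∧ β ≠ α ∧ (G.rel A β).Nonempty) ∨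
    A ⊂ G.rel A α

/-- `A ∈ ℰ` is minimal: `A ≠ ∅` and `A ∩ C ∈ {A, ∅}` for every `C ∈ ℰ`. -/
def MinimalSet (A : Set V) : Prop :=
  G.memE A ∧ A.Nonempty ∧ ∀ C : Set V, G.memE C → A ∩ C = A ∨ A ∩ C = ∅

/-- A set `Bset ⊆ E⁰` connects to a loop: there are a loop `(α, A)` and finitely many
paths `δ₁, …, δ_m ∈ ℒ*(E)`, none of which is an initial path of another, with
`A ⊆ ∪ᵢ r(Bset, δᵢ)`. -/
def ConnectsToLoop (Bset : Set V) : Prop :=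
  ∃ (α : List Λ) (A : Set V), G.IsLoop α A ∧
    ∃ (m : ℕ) (δ : Fin m → List Λ), (∀ i, G.IsLabel (δ i)) ∧
      (∀ i j, i ≠ j → ¬ (δ i <+: δ j)) ∧ A ⊆ ⋃ i, G.rel Bset (δ i)

/-- Every vertex connects to a loop: every generalized vertex `[v]_l` connects to a loop. -/
def EveryVertexConnectsToLoop : Prop :=
  ∀ (v : V) (l : ℕ), 1 ≤ l → (∃ e : G.Edge, G.rng e = v) →
    G.ConnectsToLoop (G.gv v l)

/-- The labeled space `(E, ℒ, ℰ)` is strongly cofinal. -/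
def StronglyCofinal : Prop :=
  ∀ x : ℕ → Λ, (∀ n : ℕ, 1 ≤ n → G.IsLabel (wordPrefix x n)) →
    ∀ (v : V) (l : ℕ), (∃ e : G.Edge, G.rng e = v) → 1 ≤ l →
      ∃ N : ℕ, 1 ≤ N ∧ ∃ (m : ℕ) (lam : Fin m → List Λ),
        (∀ i, G.IsLabel (lam i)) ∧
        G.range' (wordPrefix x N) ⊆ ⋃ i, G.rel (G.gv v l) (lam i)

/-- A subset `H ⊆ ℰ` is hereditary: it is closed under finite unions, relative ranges,
and subsets belonging to `ℰ`. -/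
def IsHereditary (H : Set (Set V)) : Prop :=
  (∀ A ∈ H, G.memE A) ∧
  (∀ A ∈ H, ∀ C ∈ H, A ∪ C ∈ H) ∧
  (∀ A ∈ H, ∀ β : List Λ, G.IsLabel β → G.rel A β ∈ H) ∧
  (∀ A ∈ H, ∀ C : Set V, G.memE C → C ⊆ A → C ∈ H)

/-- A subset `H ⊆ ℰ` is saturated: every `A ∈ ℰ` with `r(A, β) ∈ H` for all
`β ∈ ℒ*(E)` belongs to `H`. -/
def IsSaturated (H : Set (Set V)) : Prop :=
  ∀ A : Set V, G.memE A → (∀ β : List Λ, G.IsLabel β → G.rel A β ∈ H) → A ∈ H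

end LabeledGraph

namespace LabeledGraph

variable {V : Type*} {Λ : Type*} {G : LabeledGraph V Λ}

theorem PathLabel.ne_nil {u w : V} {β : List Λ} (h : G.PathLabel u w β) : β ≠ [] := by
  cases h <;> simp

theorem IsLabel.ne_nil {β : List Λ} (h : G.IsLabel β) : β ≠ [] := by
  obtain ⟨u, w, hp⟩ := h; exact hp.ne_nil

theorem PathLabel.append {u v w : V} {x y : List Λ}
    (hx : G.PathLabel u v x) (hy : G.PathLabel v w y) : G.PathLabel u w (x ++ y) := by
  induction hx with
  | single e => exact .cons e hy
  | cons e _ ih => exact .cons e (ih hy)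

theorem rel_mono {A B : Set V} (h : A ⊆ B) (x : List Λ) : G.rel A x ⊆ G.rel B x := by
  rintro w ⟨u, hu, hp⟩; exact ⟨u, h hu, hp⟩

theorem rel_append_subset (A : Set V) (x y : List Λ) :
    G.rel (G.rel A x) y ⊆ G.rel A (x ++ y) := by
  rintro w ⟨v, ⟨u, hu, hx⟩, hy⟩
  exact ⟨u, hu, hx.append hy⟩

theorem rel_union (A B : Set V) (x : List Λ) :
    G.rel (A ∪ B) x = G.rel A x ∪ G.rel B x := by
  ext w
  constructor
  · rintro ⟨u, hu | hu, hp⟩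
    · exact Or.inl ⟨u, hu, hp⟩
    · exact Or.inr ⟨u, hu, hp⟩
  · rintro (⟨u, hu, hp⟩ | ⟨u, hu, hp⟩)
    · exact ⟨u, Or.inl hu, hp⟩
    · exact ⟨u, Or.inr hu, hp⟩

theorem rel_empty (x : List Λ) : G.rel (∅ : Set V) x = ∅ := by
  ext w; simp [rel]

theorem loop_append {A : Set V} {x y : List Λ} (hx : A ⊆ G.rel A x) (hy : A ⊆ G.rel A y) :
    A ⊆ G.rel A (x ++ y) := by
  intro w hw
  obtain ⟨v, hv, hpy⟩ := hy hw
  obtain ⟨u, hu, hpx⟩ := hx hv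
  exact ⟨u, hu, hpx.append hpy⟩

end LabeledGraph

theorem wpow_zero {Λ : Type*} (w : List Λ) : wpow w 0 = [] := by simp [wpow]

theorem wpow_succ {Λ : Type*} (w : List Λ) (n : ℕ) :
    wpow w (n + 1) = w ++ wpow w n := by
  simp [wpow, List.replicate_succ]

theorem wpow_succ' {Λ : Type*} (w : List Λ) (n : ℕ) :
    wpow w (n + 1) = wpow w n ++ w := by
  simp [wpow, List.replicate_succ']

theorem LabeledGraph.loop_wpow_append {V : Type*} {Λ : Type*} {G : LabeledGraph V Λ}
    {A : Set V} {x y : List Λ} (hx : A ⊆ G.rel A x) (hy : A ⊆ G.rel A y) (n : ℕ) :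
    A ⊆ G.rel A (wpow x n ++ y) := by
  induction n with
  | zero => simpa [wpow_zero] using hy
  | succ n ih =>
    rw [wpow_succ, List.append_assoc]
    exact LabeledGraph.loop_append hx ih

/-- Part of the proof of Proposition 4.4: for a minimal `A ∈ ℰ` carrying a loop `(α, A)`,
the set `H = {B ∈ ℰ : r(B, β) ∩ A = ∅ for all β ∈ ℒ*(E)}` is hereditary and saturated
and `A ∉ H`; if moreover `α` has the smallest length among loops at `A`, `α` has an
exit, and every loop `(β, A)` satisfies `βᵐ = αᵏ` for some `m, k ≥ 1`, then `H`
contains a nonempty set. -/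
theorem stmt_12 {V : Type*} {Λ : Type*} [Countable V] [Countable Λ]
    (G : LabeledGraph V Λ) [Countable G.Edge] (hS : G.Standing)
    (A : Set V) (hA : G.MinimalSet A) (α : List Λ) (hloop : G.IsLoop α A) :
    G.IsHereditary
      {C : Set V | G.memE C ∧ ∀ β : List Λ, G.IsLabel β → G.rel C β ∩ A = ∅} ∧
    G.IsSaturated
      {C : Set V | G.memE C ∧ ∀ β : List Λ, G.IsLabel β → G.rel C β ∩ A = ∅} ∧
    A ∉ {C : Set V | G.memE C ∧ ∀ β : List Λ, G.IsLabel β → G.rel C β ∩ A = ∅} ∧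
    ((∀ β : List Λ, G.IsLoop β A → α.length ≤ β.length) →
      G.HasExit α A →
      (∀ β : List Λ, G.IsLoop β A →
        ∃ m k : ℕ, 1 ≤ m ∧ 1 ≤ k ∧ wpow β m = wpow α k) →
      ∃ C ∈ {C : Set V | G.memE C ∧ ∀ β : List Λ, G.IsLabel β → G.rel C β ∩ A = ∅},
        C.Nonempty) := by
  obtain ⟨hαne, hAE, hAne, hAloop⟩ := hloop
  obtain ⟨-, -, hmin⟩ := hA
  have hIsLabelα : G.IsLabel α := by
    obtain ⟨w, hw⟩ := hAne
    obtain ⟨u, hu, hp⟩ := hAloop hw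
    exact ⟨u, w, hp⟩
  -- minimality in the usable form
  have minsub : ∀ D : Set V, G.memE D → (G.rel D [] = G.rel D [] ) → (A ∩ D).Nonempty → A ⊆ D := by
    intro D hD _ hne
    rcases hmin D hD with h | h
    · intro a ha
      have : a ∈ A ∩ D := by rw [h]; exact ha
      exact this.2
    · rw [h] at hne; exact absurd hne (by simp)
  have minsub' : ∀ D : Set V, G.memE D → (A ∩ D).Nonempty → A ⊆ D := fun D hD => minsub D hD rfl
  clear minsub
  -- iterated loop
  have hwpow : ∀ k : ℕ, A ⊆ G.rel A (wpow α k ++ α) :=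
    fun k => LabeledGraph.loop_wpow_append hAloop hAloop k
  refine ⟨⟨fun C hC => hC.1, ?_, ?_, ?_⟩, ?_, ?_, ?_⟩
  · -- closed under unions
    rintro B ⟨hBE, hB⟩ C ⟨hCE, hC⟩
    refine ⟨hBE.union hCE, fun β hβ => ?_⟩
    rw [LabeledGraph.rel_union, Set.union_inter_distrib_right, hB β hβ, hC β hβ, Set.union_empty]
  · -- closed under relative ranges
    rintro B ⟨hBE, hB⟩ β hβ
    refine ⟨LabeledGraph.memE.relRange β hβ.ne_nil hBE, fun γ hγ => ?_⟩
    rw [Set.eq_empty_iff_forall_notMem]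
    rintro x ⟨hx1, hx2⟩
    have hx1' : x ∈ G.rel B (β ++ γ) := LabeledGraph.rel_append_subset B β γ hx1
    have hlab : G.IsLabel (β ++ γ) := by
      obtain ⟨u, hu, hp⟩ := hx1'
      exact ⟨u, x, hp⟩
    have := hB (β ++ γ) hlab
    rw [Set.eq_empty_iff_forall_notMem] at this
    exact this x ⟨hx1', hx2⟩
  · -- closed under subsets
    rintro B ⟨hBE, hB⟩ C hCE hCB
    refine ⟨hCE, fun β hβ => ?_⟩
    have : G.rel C β ∩ A ⊆ G.rel B β ∩ A :=
      Set.inter_subset_inter (LabeledGraph.rel_mono hCB β) le_rfl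
    rw [hB β hβ] at this
    exact Set.eq_empty_of_subset_empty this
  · -- saturated
    rintro B hBE hrel
    refine ⟨hBE, fun β hβ => ?_⟩
    by_contra hne
    have hne' : (A ∩ G.rel B β).Nonempty := by
      obtain ⟨x, hx1, hx2⟩ := Set.nonempty_iff_ne_empty.mpr hne
      exact ⟨x, hx2, hx1⟩
    have hsub : A ⊆ G.rel B β :=
      minsub' _ (LabeledGraph.memE.relRange β hβ.ne_nil hBE) hne'
    have hmem := (hrel β hβ).2 α hIsLabelα
    obtain ⟨w, hw⟩ := hAne
    have hw1 : w ∈ G.rel (G.rel B β) α := LabeledGraph.rel_mono hsub α (hAloop hw)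
    rw [Set.eq_empty_iff_forall_notMem] at hmem
    exact hmem w ⟨hw1, hw⟩
  · -- A ∉ H
    rintro ⟨-, h2⟩
    have := h2 α hIsLabelα
    rw [Set.eq_empty_iff_forall_notMem] at this
    obtain ⟨w, hw⟩ := hAne
    exact this w ⟨hAloop hw, hw⟩
  · -- existence of a nonempty element of H
    rintro hminlen hexit hpow
    rcases hexit with ⟨β, ⟨hlen, -⟩, hβα, hrelne⟩ | hssub
    · -- case (i): an exit edge-word β ≠ α
      have hβne : β ≠ [] := by
        intro h
        rw [h] at hlen
        exact hαne (List.length_eq_zero_iff.mp hlen.symm)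
      refine ⟨G.rel A β, ⟨LabeledGraph.memE.relRange β hβne hAE, fun γ hγ => ?_⟩, hrelne⟩
      rw [Set.eq_empty_iff_forall_notMem]
      rintro x ⟨hx1, hx2⟩
      have hx1' : x ∈ G.rel A (β ++ γ) := LabeledGraph.rel_append_subset A β γ hx1
      have hloop2 : A ⊆ G.rel A (β ++ γ) :=
        minsub' _ (LabeledGraph.memE.relRange _ (by simp [hβne]) hAE) ⟨x, hx2, hx1'⟩
      obtain ⟨m, k, hm, hk, heq⟩ := hpow (β ++ γ) ⟨by simp [hβne], hAE, hAne, hloop2⟩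
      obtain ⟨m', rfl⟩ : ∃ m', m = m' + 1 := ⟨m - 1, by omega⟩
      obtain ⟨k', rfl⟩ : ∃ k', k = k' + 1 := ⟨k - 1, by omega⟩
      rw [wpow_succ, wpow_succ, List.append_assoc] at heq
      exact hβα (List.append_inj_left heq hlen)
    · -- case (ii): A ⊊ r(A, α)
      obtain ⟨x0, hx0R, hx0A⟩ := Set.exists_of_ssubset hssub
      have hCE : G.memE (G.rel A α \ A) := (LabeledGraph.memE.relRange α hαne hAE).diff hAE
      refine ⟨G.rel A α \ A, ⟨hCE, fun γ hγ => ?_⟩, ⟨x0, hx0R, hx0A⟩⟩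
      by_contra hne
      obtain ⟨x, hx1, hx2⟩ := Set.nonempty_iff_ne_empty.mpr hne
      have hγne : γ ≠ [] := hγ.ne_nil
      set C := G.rel A α \ A with hCdef
      have hCsub : C ⊆ G.rel A α := Set.diff_subset
      have hx1' : x ∈ G.rel A (α ++ γ) :=
        LabeledGraph.rel_append_subset A α γ (LabeledGraph.rel_mono hCsub γ hx1)
      have hloop2 : A ⊆ G.rel A (α ++ γ) :=
        minsub' _ (LabeledGraph.memE.relRange _ (by simp [hαne]) hAE) ⟨x, hx2, hx1'⟩
      have hAC : A ⊆ G.rel C γ :=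
        minsub' _ (LabeledGraph.memE.relRange γ hγne hCE) ⟨x, hx2, hx1⟩
      obtain ⟨m, k, hm, hk, heq⟩ := hpow (α ++ γ) ⟨by simp [hαne], hAE, hAne, hloop2⟩
      obtain ⟨m', rfl⟩ : ∃ m', m = m' + 1 := ⟨m - 1, by omega⟩
      obtain ⟨k', rfl⟩ : ∃ k', k = k' + 1 := ⟨k - 1, by omega⟩
      -- word identity: γ ++ α^k = α^{k'} ++ (α ++ γ)
      have step1 : γ ++ wpow (α ++ γ) m' = wpow α k' := by
        have h := heq
        rw [wpow_succ, wpow_succ, List.append_assoc] at h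
        exact List.append_cancel_left h
      have key : γ ++ wpow α (k' + 1) = wpow α k' ++ (α ++ γ) := by
        calc γ ++ wpow α (k' + 1) = γ ++ wpow (α ++ γ) (m' + 1) := by rw [heq]
          _ = γ ++ (wpow (α ++ γ) m' ++ (α ++ γ)) := by rw [wpow_succ']
          _ = (γ ++ wpow (α ++ γ) m') ++ (α ++ γ) := by rw [List.append_assoc]
          _ = wpow α k' ++ (α ++ γ) := by rw [step1]
      -- A is contained in both r(A, μ) and r(C, μ) for μ = γ ++ α^k
      have hloopμ : A ⊆ G.rel A (γ ++ wpow α (k' + 1)) := by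
        rw [key]
        exact LabeledGraph.loop_wpow_append hAloop hloop2 k'
      have hAwk : A ⊆ G.rel A (wpow α (k' + 1)) := by
        rw [wpow_succ']
        exact hwpow k'
      have hAμ : A ⊆ G.rel C (γ ++ wpow α (k' + 1)) := fun z hz =>
        LabeledGraph.rel_append_subset C γ (wpow α (k' + 1))
          (LabeledGraph.rel_mono hAC (wpow α (k' + 1)) (hAwk hz))
      -- weak left-resolving yields a contradiction since A ∩ C = ∅
      have hACempty : A ∩ C = ∅ := by
        rw [hCdef]
        ext z; simp only [Set.mem_inter_iff, Set.mem_diff, Set.mem_empty_iff_false, iff_false]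
        tauto
      have hwlr := hS.weakly_left_resolving A C hAE hCE (γ ++ wpow α (k' + 1))
        (by simp [hγne])
      rw [hACempty, LabeledGraph.rel_empty] at hwlr
      obtain ⟨z, hz⟩ := hAne
      have : z ∈ (∅ : Set V) := by
        rw [hwlr]
        exact ⟨hloopμ hz, hAμ hz⟩
      exact this
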